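/- For all finite sequences K and L over Fin Λ, the operator l^K_L − Σ_{j=1}^{Λ} l^{K·j}_{L·j} equals the rank-one-type operator f^K_L, i.e., (l^K_L − Σ_j l^{Kj}_{Lj})(s_M) = δ_{M,L} · s_K for every sequence M. -/

import Mathlib

/-- `l^K_L − Σ_{j} l^{K·j}_{L·j}` equals the rank-one operator `f^K_L`. -/
theorem stmt_3 (Λ : ℕ) (hΛ : 0 < Λ)
    (l : List (Fin Λ) → List (Fin Λ) →
      ((List (Fin Λ) →₀ ℂ) →ₗ[ℂ] (List (Fin Λ) →₀ ℂ)))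
    (hl : ∀ I J K : List (Fin Λ),
      l I J (Finsupp.single K 1) =
        if J <+: K then Finsupp.single (I ++ K.drop J.length) 1 else 0) :
    ∀ K L M : List (Fin Λ),
      (l K L - ∑ j : Fin Λ, l (K ++ [j]) (L ++ [j])) (Finsupp.single M 1) =
        if M = L then Finsupp.single K 1 else 0 := by
  intro K L M
  simp only [LinearMap.sub_apply, LinearMap.coe_sum, Finset.sum_apply, hl]
  by_cases h : L <+: M
  · obtain ⟨t, rfl⟩ := h
    cases t with
    | nil =>
      simp only [List.append_nil, List.prefix_refl, if_true, List.drop_left,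
        List.append_nil]
      have : ∀ j : Fin Λ, ¬ (L ++ [j] <+: L) := by
        intro j hj
        have := hj.length_le
        simp at this
      simp [this]
    | cons j t' =>
      have h1 : L <+: L ++ j :: t' := List.prefix_append _ _
      rw [if_pos h1, if_neg (by simp)]
      have hdrop : (L ++ j :: t').drop L.length = j :: t' := List.drop_left
      have hsum : ∀ i : Fin Λ,
          (if L ++ [i] <+: L ++ j :: t' then
            Finsupp.single ((K ++ [i]) ++ (L ++ j :: t').drop (L ++ [i]).length) (1:ℂ) else 0)
          = if i = j then Finsupp.single (K ++ j :: t') 1 else 0 := by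
        intro i
        have hpref : (L ++ [i] <+: L ++ j :: t') ↔ i = j := by
          rw [List.prefix_append_right_inj, List.cons_prefix_cons]
          simp
        by_cases hij : i = j
        · have hp : L ++ [j] <+: L ++ j :: t' := ⟨t', by simp⟩
          rw [hij, if_pos hp, if_pos rfl]
          congr 1
          have : (L ++ j :: t').drop (L ++ [j]).length = t' := by
            have : L ++ j :: t' = (L ++ [j]) ++ t' := by simp
            rw [this, List.drop_left]
          rw [this]
          simp
        · rw [if_neg (fun hc => hij (hpref.mp hc)), if_neg hij]
      rw [Finset.sum_congr rfl (fun i _ => hsum i), Finset.sum_ite_eq' Finset.univ j,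
        if_pos (Finset.mem_univ j), hdrop]
      simp
  · rw [if_neg h, if_neg (by rintro rfl; exact h (List.prefix_refl _))]
    have : ∀ i : Fin Λ, ¬ (L ++ [i] <+: M) := fun i hi =>
      h ((List.prefix_append L [i]).trans hi)
    simp [this]
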